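/- Let T be the uniform structure of a uniform space X and let φ, φ' : [0,∞) → T be monotone cofinal functions (with respect to the order opposite to inclusion) with φ(t) ⊆ φ'(t) for all t. Define δ : [0,∞) → [0,∞) by δ(s) := sup{t : φ'(s) ⊆ φ(t)}; assume δ is monotonously increasing with lim_{s→∞} δ(s) = ∞ and δ(t₀) ≥ 2 for some t₀. Define h(t) := max{1, sup_{s ∈ [1,t]} δ⁻¹(2s)} where δ⁻¹(u) := sup{r : δ(r) ≤ u}, and for t ≥ t₀ let σ(t) be the unique solution of t = ∫₀^{σ(t)} h(s) ds, with σ(t) := 0 for t ∈ [0, t₀]. Then: (1) σ is 1-Lipschitz on [t₀, ∞), (2) lim_{t→∞} σ(t) = ∞, and (3) φ'(t) ⊆ φ(σ(t)) for all t ≥ t₀. -/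

import Mathlib

/-- Comparison of two cofinal decay functions into the uniform structure: given monotone
(w.r.t. the order opposite to inclusion) cofinal `φ ⊆ φ'` and the reparametrization `σ` defined
by the integral equation `t = ∫₀^{σ(t)} h`, the function `σ` is `1`-Lipschitz on `[t₀,∞)`,
tends to infinity, and satisfies `φ'(t) ⊆ φ(σ(t))` for `t ≥ t₀`. -/
theorem stmt7 {X : Type*} [UniformSpace X]
    (φ φ' : ℝ → Set (X × X))
    (hφu : ∀ t, 0 ≤ t → φ t ∈ uniformity X)
    (hφ'u : ∀ t, 0 ≤ t → φ' t ∈ uniformity X)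
    (hφmono : ∀ s t : ℝ, 0 ≤ s → s ≤ t → φ t ⊆ φ s)
    (hφ'mono : ∀ s t : ℝ, 0 ≤ s → s ≤ t → φ' t ⊆ φ' s)
    (hφcof : ∀ V ∈ uniformity X, ∃ t₀ : ℝ, ∀ s ≥ t₀, φ s ⊆ V)
    (hφ'cof : ∀ V ∈ uniformity X, ∃ t₀ : ℝ, ∀ s ≥ t₀, φ' s ⊆ V)
    (hsub : ∀ t : ℝ, φ t ⊆ φ' t)
    (δ : ℝ → ℝ) (hδdef : ∀ s : ℝ, δ s = sSup {t : ℝ | φ' s ⊆ φ t})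
    (hδmono : Monotone δ) (hδtop : Filter.Tendsto δ Filter.atTop Filter.atTop)
    (t₀ : ℝ) (ht₀0 : 0 ≤ t₀) (ht₀ : 2 ≤ δ t₀)
    (δinv : ℝ → ℝ) (hδinv : ∀ u : ℝ, δinv u = sSup {r : ℝ | δ r ≤ u})
    (h : ℝ → ℝ)
    (hh : ∀ t : ℝ, h t = max 1 (sSup ((fun s => δinv (2 * s)) '' Set.Icc 1 t)))
    (σ : ℝ → ℝ) (hσ0 : ∀ t ≤ t₀, σ t = 0)
    (hσeq : ∀ t ≥ t₀, t = ∫ s in (0 : ℝ)..(σ t), h s) :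
    LipschitzOnWith 1 σ (Set.Ici t₀) ∧
    Filter.Tendsto σ Filter.atTop Filter.atTop ∧
    ∀ t ≥ t₀, φ' t ⊆ φ (σ t) := by
  classical
  -- sublevel sets of δ are bounded above
  have hbdd : ∀ u : ℝ, BddAbove {r : ℝ | δ r ≤ u} := by
    intro u
    obtain ⟨R, hR⟩ := Filter.eventually_atTop.mp (hδtop.eventually_ge_atTop (u + 1))
    refine ⟨R, fun r hr => ?_⟩
    by_contra hc
    push_neg at hc
    have h1 := hR r hc.le
    simp only [Set.mem_setOf_eq] at hr
    linarith
  -- images defining h are bounded above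
  have himb : ∀ t : ℝ, BddAbove ((fun s => δinv (2 * s)) '' Set.Icc 1 t) := by
    intro t
    obtain ⟨R, hR⟩ := Filter.eventually_atTop.mp (hδtop.eventually_ge_atTop (2 * t + 1))
    refine ⟨max R 0, ?_⟩
    rintro x ⟨s, hs, rfl⟩
    show δinv (2 * s) ≤ max R 0
    rw [hδinv]
    apply Real.sSup_le _ (le_max_right R 0)
    intro r hr
    simp only [Set.mem_setOf_eq] at hr
    have hrR : r ≤ R := by
      by_contra hc
      push_neg at hc
      have h1 := hR r hc.le
      have h2 : 2 * s ≤ 2 * t := by nlinarith [hs.2]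
      linarith
    exact le_trans hrR (le_max_left _ _)
  have hone : ∀ t : ℝ, 1 ≤ h t := fun t => by rw [hh t]; exact le_max_left _ _
  have hhmono : Monotone h := by
    intro a b hab
    rw [hh a, hh b]
    rcases lt_or_ge a 1 with h1 | h1
    · rw [Set.Icc_eq_empty (not_le.mpr h1), Set.image_empty, Real.sSup_empty]
      have : max (1:ℝ) 0 = 1 := by norm_num
      rw [this]
      exact le_max_left _ _
    · exact max_le_max le_rfl (csSup_le_csSup (himb b)
        ⟨_, ⟨1, ⟨le_rfl, h1⟩, rfl⟩⟩ (Set.image_mono (Set.Icc_subset_Icc_right hab)))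
  have hint : ∀ a b : ℝ, IntervalIntegrable h MeasureTheory.volume a b :=
    fun a b => hhmono.intervalIntegrable
  have hglb : ∀ a b : ℝ, a ≤ b → b - a ≤ ∫ s in a..b, h s := by
    intro a b hab
    have h1 : (b - a) = ∫ _ in a..b, (1:ℝ) := by simp
    rw [h1]
    exact intervalIntegral.integral_mono_on hab intervalIntegrable_const (hint a b)
      (fun x _ => hone x)
  set g : ℝ → ℝ := fun x => ∫ s in (0:ℝ)..x, h s with hgdef
  have hgsplit : ∀ a b : ℝ, g b = g a + ∫ s in a..b, h s := by
    intro a b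
    simp only [hgdef]
    rw [intervalIntegral.integral_add_adjacent_intervals (hint 0 a) (hint a b)]
  have hgmono : StrictMono g := by
    intro a b hab
    have h1 := hglb a b hab.le
    have h2 := hgsplit a b
    linarith
  have hg0 : g 0 = 0 := by simp [hgdef]
  have hσg : ∀ t ≥ t₀, g (σ t) = t := fun t ht => (hσeq t ht).symm
  have hσmono : ∀ s t : ℝ, t₀ ≤ s → s ≤ t → σ s ≤ σ t := by
    intro s t hs hst
    by_contra hc
    push_neg at hc
    have h1 := hgmono hc
    rw [hσg s hs, hσg t (le_trans hs hst)] at h1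
    linarith
  have hlip : LipschitzOnWith 1 σ (Set.Ici t₀) := by
    rw [lipschitzOnWith_iff_dist_le_mul]
    intro x hx y hy
    simp only [NNReal.coe_one, one_mul]
    rw [Set.mem_Ici] at hx hy
    wlog hxy : y ≤ x generalizing x y
    · rw [dist_comm, dist_comm x y]; exact this y hy x hx (le_of_not_ge hxy)
    have hle := hσmono y x hy hxy
    have h1 : x - y = ∫ s in (σ y)..(σ x), h s := by
      have h2 := hgsplit (σ y) (σ x)
      rw [hσg y hy, hσg x hx] at h2; linarith
    have h2 := hglb (σ y) (σ x) hle
    rw [Real.dist_eq, Real.dist_eq, abs_of_nonneg (by linarith : (0:ℝ) ≤ σ x - σ y),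
      abs_of_nonneg (by linarith : (0:ℝ) ≤ x - y)]
    linarith
  have htend : Filter.Tendsto σ Filter.atTop Filter.atTop := by
    rw [Filter.tendsto_atTop_atTop]
    intro b
    refine ⟨max t₀ (g b), fun t ht => ?_⟩
    have ht0 : t₀ ≤ t := le_trans (le_max_left _ _) ht
    by_contra hc
    push_neg at hc
    have h1 := hgmono hc
    rw [hσg t ht0] at h1
    have h2 := le_trans (le_max_right t₀ (g b)) ht
    linarith
  refine ⟨hlip, htend, ?_⟩
  intro t ht
  have hδt : 2 ≤ δ t := le_trans ht₀ (hδmono ht)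
  have hδS : δ t = sSup {r : ℝ | φ' t ⊆ φ r} := hδdef t
  have hSne : {r : ℝ | φ' t ⊆ φ r}.Nonempty := by
    by_contra hc
    rw [Set.not_nonempty_iff_eq_empty] at hc
    rw [hc, Real.sSup_empty] at hδS
    linarith
  have ht0 : (0:ℝ) ≤ t := le_trans ht₀0 ht
  have hm1 : (1:ℝ) ≤ δ t / 2 := by linarith
  have hkey : ∀ s : ℝ, δ t / 2 ≤ s → t ≤ h s := by
    intro s hs
    have hs1 : (1:ℝ) ≤ s := le_trans hm1 hs
    have hts : δ t ≤ 2 * s := by linarith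
    have h1 : t ≤ δinv (2 * s) := by
      rw [hδinv]
      exact le_csSup (hbdd _) hts
    have h2 : δinv (2 * s) ≤ h s := by
      rw [hh s]
      exact le_trans (le_csSup (himb s) ⟨s, ⟨hs1, le_rfl⟩, rfl⟩) (le_max_right _ _)
    linarith
  have hup : t < g (δ t) := by
    have hsplit := hgsplit (δ t / 2) (δ t)
    have hA : δ t / 2 - 0 ≤ g (δ t / 2) := hglb 0 (δ t / 2) (by linarith)
    have hB : (δ t / 2) * t ≤ ∫ s in (δ t / 2)..(δ t), h s := by
      have hc : (δ t / 2) * t = ∫ _ in (δ t / 2)..(δ t), t := by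
        rw [intervalIntegral.integral_const, smul_eq_mul]; ring
      rw [hc]
      exact intervalIntegral.integral_mono_on (by linarith) intervalIntegrable_const
        (hint _ _) (fun x hx => hkey x hx.1)
    have hmt : t ≤ (δ t / 2) * t := by nlinarith
    linarith
  have hσlt : σ t < δ t := by
    have h1 := hσg t ht
    by_contra hc
    push_neg at hc
    have h2 : g (δ t) ≤ g (σ t) := hgmono.monotone hc
    rw [h1] at h2
    linarith
  have hσnn : 0 ≤ σ t := by
    by_contra hc
    push_neg at hc
    have h1 := hgmono hc
    rw [hg0, hσg t ht] at h1
    linarith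
  obtain ⟨r, hrS, hr⟩ := exists_lt_of_lt_csSup hSne (hδS ▸ hσlt)
  exact Set.Subset.trans hrS (hφmono (σ t) r hσnn hr.le)
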